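/- arXiv:1403.6288 — 11 statements merged into one kernel-verified Lean document; each statement's English description precedes it below -/
import Mathlib

section
/- For every graph G, the sigma chromatic number of G is at most the chromatic number of G, i.e., σ(G) ≤ χ(G). -/
open Finset
open scoped Classical

def IsSigmaColoring {V : Type*} [Fintype V] (G : SimpleGraph V) (c : V → ℕ) : Prop :=
  (∀ v, 0 < c v) ∧
  ∀ u v, G.Adj u v →
    ∑ w ∈ G.neighborFinset u, c w ≠ ∑ w ∈ G.neighborFinset v, c w

noncomputable def sigmaChrom {V : Type*} [Fintype V] (G : SimpleGraph V) : ℕ :=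
  sInf {k | ∃ c : V → ℕ, IsSigmaColoring G c ∧ (Finset.univ.image c).card = k}

lemma digit_unique {B : ℕ} (a b : ℕ → ℕ) (ha : ∀ i, a i < B) (hb : ∀ i, b i < B) :
    ∀ n : ℕ, ∑ i ∈ range n, a i * B ^ i = ∑ i ∈ range n, b i * B ^ i →
      ∀ i < n, a i = b i := by
  intro n
  induction n generalizing a b with
  | zero => intro _ i hi; omega
  | succ n ih =>
    intro h i hi
    have hB : 0 < B := lt_of_le_of_lt (Nat.zero_le _) (ha 0)
    rw [Finset.sum_range_succ', Finset.sum_range_succ'] at h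
    simp only [pow_zero, mul_one, pow_succ] at h
    have ha' : ∑ i ∈ range n, a (i + 1) * (B ^ i * B) =
        B * ∑ i ∈ range n, a (i + 1) * B ^ i := by
      rw [Finset.mul_sum]; apply Finset.sum_congr rfl; intro i _; ring
    have hb' : ∑ i ∈ range n, b (i + 1) * (B ^ i * B) =
        B * ∑ i ∈ range n, b (i + 1) * B ^ i := by
      rw [Finset.mul_sum]; apply Finset.sum_congr rfl; intro i _; ring
    rw [ha', hb'] at h
    have h0 : a 0 = b 0 := by
      have := congrArg (· % B) h
      simpa [Nat.mul_add_mod, Nat.mod_eq_of_lt (ha 0), Nat.mod_eq_of_lt (hb 0)] using this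
    have hrest : ∑ i ∈ range n, a (i + 1) * B ^ i = ∑ i ∈ range n, b (i + 1) * B ^ i := by
      rw [h0] at h
      have := Nat.add_right_cancel h
      exact Nat.eq_of_mul_eq_mul_left hB this
    rcases i with _ | j
    · exact h0
    · exact ih (fun i => a (i + 1)) (fun i => b (i + 1)) (fun i => ha _) (fun i => hb _)
        hrest j (by omega)

lemma sigmaChrom_le_of_colorable {V : Type*} [Fintype V] {G : SimpleGraph V} {n : ℕ}
    (h : G.Colorable n) : sigmaChrom G ≤ n := by
  obtain ⟨C⟩ := h
  set B : ℕ := Fintype.card V + 1 with hB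
  set c : V → ℕ := fun v => B ^ (C v : ℕ) with hc
  have hBpos : 0 < B := Nat.succ_pos _
  -- counting function
  set g : V → ℕ → ℕ := fun u i => ((G.neighborFinset u).filter (fun w => (C w : ℕ) = i)).card
    with hg
  have hglt : ∀ u i, g u i < B := by
    intro u i
    calc g u i ≤ Fintype.card V := by
          simpa using Finset.card_le_card (Finset.filter_subset _ _ |>.trans (Finset.subset_univ _))
      _ < B := Nat.lt_succ_self _
  have hsum : ∀ u, ∑ w ∈ G.neighborFinset u, c w = ∑ i ∈ range n, g u i * B ^ i := by
    intro u
    rw [← Finset.sum_fiberwise_of_maps_to (g := fun w => (C w : ℕ)) (t := range n)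
      (fun w _ => Finset.mem_range.mpr (C w).2)]
    apply Finset.sum_congr rfl
    intro i _
    rw [Finset.sum_congr rfl (fun w hw => by
      simp only [Finset.mem_filter] at hw
      show c w = B ^ i
      rw [hc]; simp [hw.2]), Finset.sum_const, smul_eq_mul]
  have hsig : IsSigmaColoring G c := by
    constructor
    · intro v; exact Nat.pow_pos hBpos
    · intro u v huv heq
      rw [hsum, hsum] at heq
      have := digit_unique (g u) (g v) (hglt u) (hglt v) n heq (C u : ℕ) (C u).2
      have hu0 : g u (C u : ℕ) = 0 := by
        rw [hg]
        simp only [Finset.card_eq_zero, Finset.filter_eq_empty_iff]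
        intro w hw
        rw [SimpleGraph.mem_neighborFinset] at hw
        exact fun hcw => C.valid hw (Fin.ext hcw.symm)
      have hv0 : 0 < g v (C u : ℕ) := by
        rw [hg]
        apply Finset.card_pos.mpr
        exact ⟨u, Finset.mem_filter.mpr ⟨(SimpleGraph.mem_neighborFinset _ _ _).mpr huv.symm, rfl⟩⟩
      omega
  have hcard : (Finset.univ.image c).card ≤ n := by
    have : Finset.univ.image c ⊆ (Finset.range n).image (fun i => B ^ i) := by
      intro x hx
      simp only [Finset.mem_image] at hx ⊢
      obtain ⟨v, _, rfl⟩ := hx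
      exact ⟨(C v : ℕ), Finset.mem_range.mpr (C v).2, rfl⟩
    calc (Finset.univ.image c).card ≤ _ := Finset.card_le_card this
      _ ≤ (Finset.range n).card := Finset.card_image_le
      _ = n := Finset.card_range n
  calc sigmaChrom G ≤ (Finset.univ.image c).card :=
        Nat.sInf_le ⟨c, hsig, rfl⟩
    _ ≤ n := hcard

/-- For every graph `G`, `σ(G) ≤ χ(G)`. -/
theorem sigmaChrom_le_chromaticNumber {V : Type*} [Fintype V] (G : SimpleGraph V) :
    (sigmaChrom G : ℕ∞) ≤ G.chromaticNumber := by
  rw [SimpleGraph.chromaticNumber]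
  apply le_iInf₂
  intro n hn
  exact_mod_cast sigmaChrom_le_of_colorable hn
end

section
/- For every d-regular graph G, the sigma chromatic number equals 2 if and only if the lucky number equals 2. -/
open Finset
open scoped Classical

/-- A lucky labeling: adjacent vertices have different neighborhood sums. -/
def IsLuckyLabeling {V : Type*} [Fintype V] (G : SimpleGraph V) (ℓ : V → ℕ) : Prop :=
  ∀ u v, G.Adj u v →
    ∑ w ∈ G.neighborFinset u, ℓ w ≠ ∑ w ∈ G.neighborFinset v, ℓ w

/-- The lucky number: minimum `k` such that there is a lucky labeling with labels in `{1,…,k}`. -/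
noncomputable def luckyNum {V : Type*} [Fintype V] (G : SimpleGraph V) : ℕ :=
  sInf {k | ∃ ℓ : V → ℕ, (∀ v, ℓ v ∈ Finset.Icc 1 k) ∧ IsLuckyLabeling G ℓ}

lemma sum_two_val {V : Type*} (s : Finset V) (f : V → ℕ) (p : V → Prop) [DecidablePred p]
    (a b : ℕ) (h1 : ∀ w ∈ s, p w → f w = a) (h2 : ∀ w ∈ s, ¬ p w → f w = b) :
    ∑ w ∈ s, f w = a * (s.filter p).card + b * (s.filter (fun w => ¬ p w)).card := by
  rw [← Finset.sum_filter_add_sum_filter_not s p]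
  congr 1
  · rw [Finset.sum_congr rfl (fun w hw => h1 w (Finset.mem_filter.mp hw).1
      (Finset.mem_filter.mp hw).2), Finset.sum_const, smul_eq_mul, mul_comm]
  · rw [Finset.sum_congr rfl (fun w hw => h2 w (Finset.mem_filter.mp hw).1
      (Finset.mem_filter.mp hw).2), Finset.sum_const, smul_eq_mul, mul_comm]

/-- for every `d`-regular graph `G`, `σ(G) = 2 ↔ η(G) = 2`. -/
theorem sigmaChrom_eq_two_iff_luckyNum_eq_two {V : Type*} [Fintype V]
    (G : SimpleGraph V) (d : ℕ) (hreg : G.IsRegularOfDegree d) :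
    sigmaChrom G = 2 ↔ luckyNum G = 2 := by
  set S : Set ℕ := {k | ∃ c : V → ℕ, IsSigmaColoring G c ∧ (Finset.univ.image c).card = k} with hS
  set L : Set ℕ := {k | ∃ ℓ : V → ℕ, (∀ v, ℓ v ∈ Finset.Icc 1 k) ∧ IsLuckyLabeling G ℓ} with hL
  have cardN : ∀ x : V, (G.neighborFinset x).card = d := fun x => hreg x
  constructor
  · intro hσ
    -- 2 ∈ S
    have hSne : S.Nonempty := by
      by_contra h
      rw [Set.not_nonempty_iff_eq_empty] at h
      rw [sigmaChrom, ← hS, h, Nat.sInf_empty] at hσ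
      exact two_ne_zero hσ.symm
    have h2S : 2 ∈ S := by
      have := Nat.sInf_mem hSne
      rwa [show sInf S = 2 from hσ] at this
    obtain ⟨c, hc, hcard⟩ := h2S
    -- V nonempty
    have hVne : Nonempty V := by
      by_contra h
      simp only [not_nonempty_iff] at h
      rw [Finset.univ_eq_empty, Finset.image_empty, Finset.card_empty] at hcard
      exact two_ne_zero hcard.symm
    -- edge exists
    have hedge : ∃ u v, G.Adj u v := by
      by_contra h
      push_neg at h
      have h1 : (1 : ℕ) ∈ S := by
        refine ⟨fun _ => 1, ⟨fun _ => one_pos, fun u v huv => absurd huv (h u v)⟩, ?_⟩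
        rw [Finset.image_const Finset.univ_nonempty, Finset.card_singleton]
      have := Nat.sInf_le h1
      rw [show sInf S = 2 from hσ] at this
      omega
    obtain ⟨a, b, hab, himg⟩ := Finset.card_eq_two.mp hcard
    have hval : ∀ v, c v = a ∨ c v = b := by
      intro v
      have : c v ∈ Finset.univ.image c := Finset.mem_image_of_mem c (Finset.mem_univ v)
      rw [himg] at this
      simpa using this
    set ℓ : V → ℕ := fun v => if c v = a then 1 else 2 with hℓ
    set k : V → ℕ := fun x => ((G.neighborFinset x).filter (fun w => c w = a)).card with hk
    have hkd : ∀ x, k x + ((G.neighborFinset x).filter (fun w => ¬ c w = a)).card = d := by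
      intro x
      rw [← cardN x]
      exact Finset.card_filter_add_card_filter_not _
    have hsumc : ∀ x, ∑ w ∈ G.neighborFinset x, c w
        = a * k x + b * (d - k x) := by
      intro x
      rw [sum_two_val (G.neighborFinset x) c (fun w => c w = a) a b
        (fun w _ hw => hw) (fun w _ hw => (hval w).resolve_left hw)]
      have hcc : ((G.neighborFinset x).filter (fun w => ¬ c w = a)).card = d - k x := by
        have := hkd x; omega
      rw [hcc]
    have hsumℓ : ∀ x, ∑ w ∈ G.neighborFinset x, ℓ w = 1 * k x + 2 * (d - k x) := by
      intro x
      rw [sum_two_val (G.neighborFinset x) ℓ (fun w => c w = a) 1 2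
        (fun w _ hw => by simp [hℓ, hw]) (fun w _ hw => by simp [hℓ, hw])]
      have hcc : ((G.neighborFinset x).filter (fun w => ¬ c w = a)).card = d - k x := by
        have := hkd x; omega
      rw [hcc]
    have hkle : ∀ x, k x ≤ d := fun x => by have := hkd x; omega
    have hlucky : IsLuckyLabeling G ℓ := by
      intro u v huv
      have hne := hc.2 u v huv
      rw [hsumc u, hsumc v] at hne
      rw [hsumℓ u, hsumℓ v]
      have hku := hkle u
      have hkv := hkle v
      have : k u ≠ k v := fun h => hne (by rw [h])
      omega
    have h2L : 2 ∈ L := by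
      refine ⟨ℓ, fun v => ?_, hlucky⟩
      simp only [hℓ]
      by_cases h : c v = a <;> simp [h]
    have hLne : L.Nonempty := ⟨2, h2L⟩
    have hmem := Nat.sInf_mem hLne
    obtain ⟨ℓ', hℓ'1, hℓ'2⟩ := hmem
    have hle : sInf L ≤ 2 := Nat.sInf_le h2L
    have h0 : sInf L ≠ 0 := by
      intro h
      obtain ⟨v⟩ := hVne
      have := hℓ'1 v
      rw [h] at this
      simp at this
    have h1 : sInf L ≠ 1 := by
      intro h
      obtain ⟨u, v, huv⟩ := hedge
      apply hℓ'2 u v huv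
      have hconst : ∀ w, ℓ' w = 1 := by
        intro w
        have := hℓ'1 w
        rw [h] at this
        simp at this
        omega
      simp only [Finset.sum_congr rfl (fun w _ => hconst w), Finset.sum_const,
        cardN u, cardN v]
    rw [luckyNum, ← hL]
    omega
  · intro hη
    have hLne : L.Nonempty := by
      by_contra h
      rw [Set.not_nonempty_iff_eq_empty] at h
      rw [luckyNum, ← hL, h, Nat.sInf_empty] at hη
      exact two_ne_zero hη.symm
    have h2L : 2 ∈ L := by
      have := Nat.sInf_mem hLne
      rwa [show sInf L = 2 from hη] at this
    obtain ⟨ℓ, hℓmem, hlucky⟩ := h2L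
    -- V nonempty
    have hVne : Nonempty V := by
      by_contra h
      simp only [not_nonempty_iff] at h
      have h0 : (0 : ℕ) ∈ L := ⟨fun _ => 1, fun v => (h.elim v), fun u v huv => (h.elim u)⟩
      have := Nat.sInf_le h0
      rw [show sInf L = 2 from hη] at this
      omega
    -- edge exists
    have hedge : ∃ u v, G.Adj u v := by
      by_contra h
      push_neg at h
      have h1 : (1 : ℕ) ∈ L := ⟨fun _ => 1, fun v => by simp, fun u v huv => absurd huv (h u v)⟩
      have := Nat.sInf_le h1
      rw [show sInf L = 2 from hη] at this
      omega
    -- ℓ is a sigma coloring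
    have hpos : ∀ v, 0 < ℓ v := by
      intro v
      have := hℓmem v
      simp only [Finset.mem_Icc] at this
      omega
    have hsigma : IsSigmaColoring G ℓ := ⟨hpos, hlucky⟩
    have hsub : Finset.univ.image ℓ ⊆ {1, 2} := by
      intro x hx
      obtain ⟨v, _, hv⟩ := Finset.mem_image.mp hx
      have := hℓmem v
      simp only [Finset.mem_Icc] at this
      simp only [Finset.mem_insert, Finset.mem_singleton]
      omega
    have hcardle : (Finset.univ.image ℓ).card ≤ 2 := by
      calc (Finset.univ.image ℓ).card ≤ ({1, 2} : Finset ℕ).card := Finset.card_le_card hsub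
      _ = 2 := by decide
    have hcard0 : (Finset.univ.image ℓ).card ≠ 0 := by
      intro h
      rw [Finset.card_eq_zero, Finset.image_eq_empty, Finset.univ_eq_empty_iff] at h
      exact (not_isEmpty_of_nonempty V) h
    have hcard1 : (Finset.univ.image ℓ).card ≠ 1 := by
      intro h
      obtain ⟨x, hx⟩ := Finset.card_eq_one.mp h
      have hconst : ∀ v, ℓ v = x := by
        intro v
        have : ℓ v ∈ Finset.univ.image ℓ := Finset.mem_image_of_mem ℓ (Finset.mem_univ v)
        rw [hx] at this
        simpa using this
      obtain ⟨u, v, huv⟩ := hedge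
      apply hlucky u v huv
      simp only [Finset.sum_congr rfl (fun w _ => hconst w), Finset.sum_const,
        cardN u, cardN v]
    have h2S : 2 ∈ S := ⟨ℓ, hsigma, by omega⟩
    have hSne : S.Nonempty := ⟨2, h2S⟩
    have hle : sInf S ≤ 2 := Nat.sInf_le h2S
    obtain ⟨c', hc', hcard'⟩ := Nat.sInf_mem hSne
    have h0 : sInf S ≠ 0 := by
      intro h
      rw [h, Finset.card_eq_zero, Finset.image_eq_empty, Finset.univ_eq_empty_iff] at hcard'
      exact (not_isEmpty_of_nonempty V) hcard'
    have h1 : sInf S ≠ 1 := by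
      intro h
      rw [h] at hcard'
      obtain ⟨x, hx⟩ := Finset.card_eq_one.mp hcard'
      have hconst : ∀ v, c' v = x := by
        intro v
        have : c' v ∈ Finset.univ.image c' := Finset.mem_image_of_mem c' (Finset.mem_univ v)
        rw [hx] at this
        simpa using this
      obtain ⟨u, v, huv⟩ := hedge
      apply hc'.2 u v huv
      simp only [Finset.sum_congr rfl (fun w _ => hconst w), Finset.sum_const,
        cardN u, cardN v]
    rw [sigmaChrom, ← hS]
    omega
end

section
/- Every odd cycle C_{2m+1} (m ≥ 1) has lucky number at least 3; equivalently, there is no labeling of the vertices of an odd cycle with labels from {1,2} such that every two adjacent vertices have different sums of labels over their neighborhoods. -/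
open Finset
open scoped Classical

/-- The cycle graph on `ZMod n`: `i` is adjacent to `i ± 1`. -/
def cycleG (n : ℕ) : SimpleGraph (ZMod n) :=
  SimpleGraph.fromRel (fun i j => j = i + 1)

/-! ### Auxiliary lemmas -/

private lemma pow4_helper {a b c d : ℕ} (hab : a < b) (hcd : c < d)
    (h : 4 ^ a + 4 ^ b = 4 ^ c + 4 ^ d) : a = c ∧ b = d := by
  have hbd : b = d := by
    rcases Nat.lt_trichotomy b d with h1 | h1 | h1
    · have h2 : (4:ℕ) ^ a < 4 ^ b := Nat.pow_lt_pow_right (by norm_num) hab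
      have h3 : (4:ℕ) ^ (b + 1) ≤ 4 ^ d := Nat.pow_le_pow_right (by norm_num) h1
      have h4 : (4:ℕ) ^ (b + 1) = 4 * 4 ^ b := by ring
      have h5 : 0 < (4:ℕ) ^ c := by positivity
      have h6 : 0 < (4:ℕ) ^ a := by positivity
      omega
    · exact h1
    · have h2 : (4:ℕ) ^ c < 4 ^ d := Nat.pow_lt_pow_right (by norm_num) hcd
      have h3 : (4:ℕ) ^ (d + 1) ≤ 4 ^ b := Nat.pow_le_pow_right (by norm_num) h1
      have h4 : (4:ℕ) ^ (d + 1) = 4 * 4 ^ d := by ring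
      have h5 : 0 < (4:ℕ) ^ a := by positivity
      have h6 : 0 < (4:ℕ) ^ c := by positivity
      omega
  subst hbd
  have h5 : (4:ℕ) ^ a = 4 ^ c := by omega
  exact ⟨Nat.pow_right_injective (by norm_num) h5, rfl⟩

private lemma pow4_eq {a b c d : ℕ} (hab : a ≠ b) (hcd : c ≠ d)
    (h : 4 ^ a + 4 ^ b = 4 ^ c + 4 ^ d) : (a = c ∧ b = d) ∨ (a = d ∧ b = c) := by
  rcases hab.lt_or_gt with h1 | h1 <;> rcases hcd.lt_or_gt with h2 | h2
  · exact Or.inl (pow4_helper h1 h2 h)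
  · have := pow4_helper h1 h2 (by omega : 4 ^ a + 4 ^ b = 4 ^ d + 4 ^ c)
    exact Or.inr this
  · have := pow4_helper h1 h2 (by omega : 4 ^ b + 4 ^ a = 4 ^ c + 4 ^ d)
    exact Or.inr ⟨this.2, this.1⟩
  · have := pow4_helper h1 h2 (by omega : 4 ^ b + 4 ^ a = 4 ^ d + 4 ^ c)
    exact Or.inl ⟨this.2, this.1⟩

section Cycle

variable (m : ℕ)

private lemma czmod_one_ne_zero (hm : 1 ≤ m) : (1 : ZMod (2 * m + 1)) ≠ 0 := by
  have : ((1 : ℕ) : ZMod (2 * m + 1)) ≠ 0 := by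
    rw [Ne, ZMod.natCast_eq_zero_iff]
    intro h
    have := Nat.le_of_dvd (by norm_num) h
    omega
  simpa using this

private lemma czmod_two_ne_zero (hm : 1 ≤ m) : (2 : ZMod (2 * m + 1)) ≠ 0 := by
  have : ((2 : ℕ) : ZMod (2 * m + 1)) ≠ 0 := by
    rw [Ne, ZMod.natCast_eq_zero_iff]
    intro h
    have := Nat.le_of_dvd (by norm_num) h
    omega
  simpa using this

private lemma sub_ne_add (hm : 1 ≤ m) (i : ZMod (2 * m + 1)) : i - 1 ≠ i + 1 := by
  intro h
  exact czmod_two_ne_zero m hm (by linear_combination -h)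

private lemma nbr_finset (hm : 1 ≤ m) (i : ZMod (2 * m + 1)) :
    (cycleG (2 * m + 1)).neighborFinset i = {i - 1, i + 1} := by
  have h1 := czmod_one_ne_zero m hm
  ext v
  rw [SimpleGraph.mem_neighborFinset]
  simp only [cycleG, SimpleGraph.fromRel_adj, Finset.mem_insert, Finset.mem_singleton]
  constructor
  · rintro ⟨hne, h | h⟩
    · exact Or.inr h
    · exact Or.inl (by rw [h]; ring)
  · rintro (h | h)
    · refine ⟨?_, Or.inr (by rw [h]; ring)⟩
      intro he
      apply h1
      have : i - 1 = i := by rw [← h, he]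
      simpa using sub_eq_self.mp this
    · refine ⟨?_, Or.inl h⟩
      intro he
      exact h1 (left_eq_add.mp (he.trans h))

private lemma sum_nbr (hm : 1 ≤ m) (ℓ : ZMod (2 * m + 1) → ℕ) (i : ZMod (2 * m + 1)) :
    ∑ w ∈ (cycleG (2 * m + 1)).neighborFinset i, ℓ w = ℓ (i - 1) + ℓ (i + 1) := by
  rw [nbr_finset m hm i, Finset.sum_pair (sub_ne_add m hm i)]

private lemma adj_succ (hm : 1 ≤ m) (i : ZMod (2 * m + 1)) :
    (cycleG (2 * m + 1)).Adj i (i + 1) := by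
  refine ⟨?_, Or.inl rfl⟩
  intro h
  exact czmod_one_ne_zero m hm (left_eq_add.mp h)

/-- The combinatorial core: no `{1,2}`-labeling of an odd cycle has all adjacent
neighborhood sums distinct. -/
private lemma core (hm : 1 ≤ m) (ℓ : ZMod (2 * m + 1) → ℕ)
    (hℓ : ∀ v, ℓ v = 1 ∨ ℓ v = 2) :
    ∃ i : ZMod (2 * m + 1), ℓ (i - 1) + ℓ (i + 1) = ℓ i + ℓ (i + 2) := by
  by_contra hc
  push_neg at hc
  haveI : NeZero (2 * m + 1) := ⟨by omega⟩
  -- exactly one of the two neighbors of an element of `Z` is in `Z`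
  have hone : ∀ j : ZMod (2 * m + 1), ℓ j = ℓ (j + 1) →
      ¬(ℓ (j - 1) = ℓ j ∧ ℓ (j + 1) = ℓ (j + 2)) ∧
        (ℓ (j - 1) = ℓ j ∨ ℓ (j + 1) = ℓ (j + 2)) := by
    intro j hj
    have h1 := hc j
    have hA := hℓ (j - 1); have hB := hℓ j; have hC := hℓ (j + 1); have hD := hℓ (j + 2)
    omega
  let Z : Finset (ZMod (2 * m + 1)) := Finset.univ.filter (fun j => ℓ j = ℓ (j + 1))
  let P : Finset (ZMod (2 * m + 1)) := Z.filter (fun j => ℓ (j + 1) = ℓ (j + 2))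
  let Q : Finset (ZMod (2 * m + 1)) := Z.filter (fun j => ¬ℓ (j + 1) = ℓ (j + 2))
  have hmemZ : ∀ j : ZMod (2 * m + 1), j ∈ Z ↔ ℓ j = ℓ (j + 1) := by
    intro j; simp [Z]
  have hmemP : ∀ j : ZMod (2 * m + 1), j ∈ P ↔ (ℓ j = ℓ (j + 1) ∧ ℓ (j + 1) = ℓ (j + 2)) := by
    intro j; simp only [P, Z, Finset.mem_filter, Finset.mem_univ, true_and]
  have hmemQ : ∀ j : ZMod (2 * m + 1), j ∈ Q ↔ (ℓ j = ℓ (j + 1) ∧ ¬ℓ (j + 1) = ℓ (j + 2)) := by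
    intro j; simp only [Q, Z, Finset.mem_filter, Finset.mem_univ, true_and]
  have hPQ : P.card = Q.card := by
    apply Finset.card_bij (fun j _ => j + 1)
    · intro j hj
      rw [hmemP] at hj
      rw [hmemQ]
      have h2 : j + 1 + 1 = j + 2 := by ring
      have h3 : j + 1 - 1 = j := by ring
      have hj' : ℓ (j + 1) = ℓ (j + 1 + 1) := by rw [h2]; exact hj.2
      have hx := (hone (j + 1) hj').1
      exact ⟨hj', fun hcon => hx ⟨by rw [h3]; exact hj.1, hcon⟩⟩
    · intro a _ b _ h
      exact add_right_cancel h
    · intro j hj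
      rw [hmemQ] at hj
      have hx := (hone j hj.1).2
      have hjm : ℓ (j - 1) = ℓ j := by tauto
      refine ⟨j - 1, ?_, by ring⟩
      rw [hmemP]
      have h3 : j - 1 + 1 = j := by ring
      have h4 : j - 1 + 2 = j + 1 := by ring
      rw [h3, h4]
      exact ⟨hjm, hj.1⟩
  have hZcard : Z.card = P.card + Q.card :=
    (Finset.card_filter_add_card_filter_not (fun j => ℓ (j + 1) = ℓ (j + 2))).symm
  -- parity of the complement
  let B : Finset (ZMod (2 * m + 1)) := Finset.univ.filter (fun j => ¬ℓ j = ℓ (j + 1))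
  have hZB : Z.card + B.card = 2 * m + 1 := by
    have := Finset.card_filter_add_card_filter_not
      (s := (Finset.univ : Finset (ZMod (2 * m + 1)))) (fun j => ℓ j = ℓ (j + 1))
    rwa [Finset.card_univ, ZMod.card] at this
  have hsum1 : ∑ j : ZMod (2 * m + 1), ℓ (j + 1) = ∑ j : ZMod (2 * m + 1), ℓ j :=
    Fintype.sum_equiv (Equiv.addRight (1 : ZMod (2 * m + 1))) _ _ (fun j => rfl)
  have hsplit : (∑ j ∈ Z, (ℓ j + ℓ (j + 1))) + (∑ j ∈ B, (ℓ j + ℓ (j + 1)))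
      = 2 * ∑ j : ZMod (2 * m + 1), ℓ j := by
    rw [Finset.sum_filter_add_sum_filter_not]
    rw [Finset.sum_add_distrib, hsum1]
    ring
  have hZsum : ∑ j ∈ Z, (ℓ j + ℓ (j + 1)) = 2 * ∑ j ∈ Z, ℓ j := by
    rw [Finset.mul_sum]
    apply Finset.sum_congr rfl
    intro j hj
    rw [hmemZ] at hj
    omega
  have hBsum : ∑ j ∈ B, (ℓ j + ℓ (j + 1)) = 3 * B.card := by
    have hB3 : ∀ j ∈ B, ℓ j + ℓ (j + 1) = 3 := by
      intro j hj
      simp only [B, Finset.mem_filter] at hj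
      have h1 := hℓ j; have h2 := hℓ (j + 1)
      omega
    rw [Finset.sum_congr rfl hB3, Finset.sum_const, smul_eq_mul, mul_comm]
  rw [hZsum, hBsum] at hsplit
  omega

end Cycle

/-- every odd cycle `C_{2m+1}` (`m ≥ 1`) has lucky number at least `3`;
equivalently, for every labeling with labels from `{1,2}` some two adjacent vertices
have equal neighborhood sums. -/
theorem oddCycle_luckyNum_ge_three (m : ℕ) (hm : 1 ≤ m) :
    3 ≤ luckyNum (cycleG (2 * m + 1)) ∧
      ∀ ℓ : ZMod (2 * m + 1) → ℕ, (∀ v, ℓ v = 1 ∨ ℓ v = 2) →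
        ∃ i : ZMod (2 * m + 1), ℓ (i - 1) + ℓ (i + 1) = ℓ i + ℓ (i + 2) := by
  haveI : NeZero (2 * m + 1) := ⟨by omega⟩
  constructor
  · -- the set of feasible `k` is nonempty: powers of 4 give a lucky labeling
    have hnonempty : {k | ∃ ℓ : ZMod (2 * m + 1) → ℕ,
        (∀ v, ℓ v ∈ Finset.Icc 1 k) ∧ IsLuckyLabeling (cycleG (2 * m + 1)) ℓ}.Nonempty := by
      refine ⟨4 ^ (2 * m + 1), fun i => 4 ^ i.val, fun v => ?_, ?_⟩
      · rw [Finset.mem_Icc]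
        exact ⟨Nat.one_le_pow _ _ (by norm_num),
          Nat.pow_le_pow_right (by norm_num) (le_of_lt (ZMod.val_lt v))⟩
      · have key : ∀ u : ZMod (2 * m + 1),
            (4:ℕ) ^ (u - 1).val + 4 ^ (u + 1).val ≠ 4 ^ u.val + 4 ^ (u + 2).val := by
          intro u h
          have hab : (u - 1).val ≠ (u + 1).val := fun hh =>
            sub_ne_add m hm u (ZMod.val_injective _ hh)
          have hcd : u.val ≠ (u + 2).val := by
            intro hh
            have huu : u = u + 2 := ZMod.val_injective _ hh
            exact czmod_two_ne_zero m hm (left_eq_add.mp huu)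
          rcases pow4_eq hab hcd h with ⟨h1, _⟩ | ⟨_, h2⟩
          · have : u - 1 = u := ZMod.val_injective _ h1
            exact czmod_one_ne_zero m hm (sub_eq_self.mp this)
          · have : u + 1 = u := ZMod.val_injective _ h2
            exact czmod_one_ne_zero m hm (add_eq_left.mp this)
        intro u v huv
        rw [sum_nbr m hm, sum_nbr m hm]
        rcases huv.2 with h | h
        · subst h
          have h1 : u + 1 - 1 = u := by ring
          have h2 : u + 1 + 1 = u + 2 := by ring
          rw [h1, h2]
          exact key u
        · subst h
          have h1 : v + 1 - 1 = v := by ring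
          have h2 : v + 1 + 1 = v + 2 := by ring
          rw [h1, h2]
          exact (key v).symm
    apply le_csInf hnonempty
    intro k hk
    by_contra hlt
    push_neg at hlt
    obtain ⟨ℓ, hmem, hlucky⟩ := hk
    have hl2 : ∀ v, ℓ v = 1 ∨ ℓ v = 2 := by
      intro v
      have := hmem v
      rw [Finset.mem_Icc] at this
      omega
    obtain ⟨i, hi⟩ := core m hm ℓ hl2
    apply hlucky i (i + 1) (adj_succ m hm i)
    rw [sum_nbr m hm, sum_nbr m hm]
    have h1 : i + 1 - 1 = i := by ring
    have h2 : i + 1 + 1 = i + 2 := by ring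
    rw [h1, h2]
    exact hi
  · exact core m hm
end

section
/- Let G be a graph with maximum degree Δ, and let c be a sigma coloring of G using k distinct labels. If s ≥ Δ + 1, then the labeling obtained by replacing the k labels (in order) by 1, s, s², ..., s^{k-1} is also a sigma coloring of G. -/
open Finset
open scoped Classical

lemma pow_sum_unique (s : ℕ) :
    ∀ n (f g : ℕ → ℕ), (∀ i, i < n → f i < s) → (∀ i, i < n → g i < s) →
    (∑ i ∈ Finset.range n, f i * s ^ i = ∑ i ∈ Finset.range n, g i * s ^ i) →
    ∀ i, i < n → f i = g i := by
  intro n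
  induction n with
  | zero => intro f g _ _ _ i hi; omega
  | succ n ih =>
    intro f g hf hg hsum i hi
    have hs0 : 0 < s := lt_of_le_of_lt (Nat.zero_le _) (hf 0 (Nat.succ_pos n))
    rw [Finset.sum_range_succ', Finset.sum_range_succ'] at hsum
    have hA : ∀ h : ℕ → ℕ, ∑ i ∈ Finset.range n, h (i + 1) * s ^ (i + 1) =
        (∑ i ∈ Finset.range n, h (i + 1) * s ^ i) * s := by
      intro h
      rw [Finset.sum_mul]
      exact Finset.sum_congr rfl fun j _ => by ring
    rw [hA f, hA g] at hsum
    simp only [pow_zero, mul_one] at hsum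
    have h0 : f 0 = g 0 := by
      have h := congrArg (· % s) hsum
      rw [add_comm _ (f 0), add_comm _ (g 0), Nat.add_mul_mod_self_right,
        Nat.add_mul_mod_self_right, Nat.mod_eq_of_lt (hf 0 (Nat.succ_pos n)),
        Nat.mod_eq_of_lt (hg 0 (Nat.succ_pos n))] at h
      exact h
    have hAB : (∑ i ∈ Finset.range n, f (i + 1) * s ^ i) =
        (∑ i ∈ Finset.range n, g (i + 1) * s ^ i) := by
      rw [h0] at hsum
      have := Nat.add_right_cancel hsum
      exact Nat.eq_of_mul_eq_mul_right hs0 this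
    have := ih (fun i => f (i + 1)) (fun i => g (i + 1))
      (fun i hi => hf (i + 1) (by omega)) (fun i hi => hg (i + 1) (by omega)) hAB
    rcases i with _ | j
    · exact h0
    · exact this j (by omega)

/-- if `c = a ∘ t` is a sigma coloring of `G` using the `k` labels
`a 0 < a 1 < ⋯ < a (k-1)`, and `s ≥ Δ(G) + 1`, then replacing the labels in order by
`1 = s⁰, s, s², …, s^(k-1)` again yields a sigma coloring. -/
theorem sigmaColoring_powers {V : Type*} [Fintype V] (G : SimpleGraph V)
    (s k : ℕ) (hs : G.maxDegree + 1 ≤ s)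
    (a : Fin k → ℕ) (ha : StrictMono a) (t : V → Fin k)
    (hc : IsSigmaColoring G (fun v => a (t v))) :
    IsSigmaColoring G (fun v => s ^ (t v : ℕ)) := by
  have hs0 : 0 < s := by omega
  constructor
  · intro v; exact pow_pos hs0 _
  · intro u v huv heq
    -- fiber decomposition
    have key : ∀ (x : V) (h : ℕ → ℕ),
        ∑ w ∈ G.neighborFinset x, h (t w : ℕ) =
        ∑ j ∈ Finset.range k,
          ((G.neighborFinset x).filter (fun w => (t w : ℕ) = j)).card * h j := by
      intro x h
      rw [← Finset.sum_fiberwise_of_maps_to (fun w _ => Finset.mem_range.mpr (t w).isLt)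
        (fun w => h (t w : ℕ))]
      refine Finset.sum_congr rfl fun j _ => ?_
      rw [Finset.sum_congr rfl (fun w hw => by
        rw [(Finset.mem_filter.mp hw).2]), Finset.sum_const, smul_eq_mul]
    have hcount : ∀ (x : V) (j : ℕ),
        ((G.neighborFinset x).filter (fun w => (t w : ℕ) = j)).card < s := by
      intro x j
      calc ((G.neighborFinset x).filter (fun w => (t w : ℕ) = j)).card
          ≤ (G.neighborFinset x).card := Finset.card_filter_le _ _
        _ = G.degree x := (G.card_neighborFinset_eq_degree x)
        _ ≤ G.maxDegree := G.degree_le_maxDegree x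
        _ < s := by omega
    rw [key u (fun j => s ^ j), key v (fun j => s ^ j)] at heq
    have hfib := pow_sum_unique s k _ _ (fun j _ => hcount u j) (fun j _ => hcount v j) heq
    apply hc.2 u v huv
    set a' : ℕ → ℕ := fun j => if hj : j < k then a ⟨j, hj⟩ else 0 with ha'
    have aext : ∀ w : V, a (t w) = a' (t w : ℕ) := by
      intro w; simp [ha', (t w).isLt]
    have e1 : ∑ w ∈ G.neighborFinset u, a (t w) = ∑ w ∈ G.neighborFinset u, a' (t w : ℕ) :=
      Finset.sum_congr rfl fun w _ => aext w
    have e2 : ∑ w ∈ G.neighborFinset v, a (t w) = ∑ w ∈ G.neighborFinset v, a' (t w : ℕ) :=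
      Finset.sum_congr rfl fun w _ => aext w
    simp only [e1, e2]
    rw [key u a', key v a']
    exact Finset.sum_congr rfl fun j hj => by
      rw [hfib j (Finset.mem_range.mp hj)]
end

section
/- Let G be the graph obtained from the complete graph on (k+2 choose 2) vertices by attaching k new pendant leaves to each vertex of the complete graph. Then the sigma chromatic number of G is at most 3. -/
open Finset
open scoped Classical

/-- The complete graph on `Fin N` with `k` pendant leaves attached to each vertex:
`inl a` are the clique vertices, `inr (a, j)` is the `j`-th leaf attached to `a`. -/
def leafy (k N : ℕ) : SimpleGraph (Fin N ⊕ Fin N × Fin k) :=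
  SimpleGraph.fromRel (fun x y =>
    match x, y with
    | Sum.inl _, Sum.inl _ => True
    | Sum.inl a, Sum.inr (b, _) => a = b
    | _, _ => False)

/-! ### Auxiliary machinery -/

/-- Triangular numbers. -/
def triT : ℕ → ℕ
  | 0 => 0
  | n + 1 => triT n + n + 1

lemma triT_succ_eq_choose (n : ℕ) : triT (n + 1) = (n + 2).choose 2 := by
  induction n with
  | zero => rfl
  | succ m ih =>
    show triT (m + 1) + (m + 1) + 1 = (m + 3).choose 2
    have h3 : (m + 3).choose 2 = (m + 2) + (m + 2).choose 2 := by
      rw [show m + 3 = (m + 2) + 1 from rfl, show (2:ℕ) = 1 + 1 from rfl,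
        Nat.choose_succ_succ (m + 2) 1, Nat.choose_one_right]
    omega

lemma triT_mono {m n : ℕ} (h : m ≤ n) : triT m ≤ triT n := by
  induction n with
  | zero =>
    have hm : m = 0 := Nat.le_zero.mp h
    rw [hm]
  | succ p ih =>
    rcases Nat.lt_or_ge m (p + 1) with h' | h'
    · have := ih (by omega)
      show triT m ≤ triT p + p + 1
      omega
    · have : m = p + 1 := by omega
      subst this; rfl

/-- The triangular enumeration: `triF a = (r, i)` with `i ≤ r` and `a = triT r + i`. -/
def triF : ℕ → ℕ × ℕ
  | 0 => (0, 0)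
  | a + 1 =>
    let p := triF a
    if p.2 < p.1 then (p.1, p.2 + 1) else (p.1 + 1, 0)

lemma triF_spec (a : ℕ) : (triF a).2 ≤ (triF a).1 ∧ a = triT (triF a).1 + (triF a).2 := by
  induction a with
  | zero => exact ⟨le_refl _, rfl⟩
  | succ b ih =>
    obtain ⟨h1, h2⟩ := ih
    show (if (triF b).2 < (triF b).1 then ((triF b).1, (triF b).2 + 1)
        else ((triF b).1 + 1, 0)).2 ≤ _ ∧ _
    by_cases h : (triF b).2 < (triF b).1
    · simp only [triF, h, if_true]
      constructor
      · omega
      · omega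
    · simp only [triF, h, if_false]
      have he : (triF b).2 = (triF b).1 := le_antisymm h1 (by omega)
      constructor
      · omega
      · show b + 1 = triT ((triF b).1 + 1) + 0
        rw [show triT ((triF b).1 + 1) = triT (triF b).1 + (triF b).1 + 1 from rfl]
        omega

lemma triF_inj {a b : ℕ} (h : triF a = triF b) : a = b := by
  have ha := (triF_spec a).2
  have hb := (triF_spec b).2
  rw [h] at ha; omega

/-- The row index of `a` is at most `k` whenever `a < triT (k+1)`. -/
lemma triF_fst_le {a k : ℕ} (h : a < triT (k + 1)) : (triF a).1 ≤ k := by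
  by_contra hc
  have h1 : k + 1 ≤ (triF a).1 := by omega
  have := triT_mono h1
  have := (triF_spec a).2
  omega

/-- Sum of a three-step step function. -/
lemma sum_step (i r k s t : ℕ) (h1 : i ≤ r) (h2 : r ≤ k) :
    (∑ j ∈ Finset.range k, (if j < i then s else if j < r then t else 1))
      = i * s + (r - i) * t + (k - r) := by
  rw [Finset.range_eq_Ico, ← Finset.sum_Ico_consecutive _ (Nat.zero_le r) h2,
    ← Finset.sum_Ico_consecutive _ (Nat.zero_le i) h1]
  have e1 : (∑ j ∈ Finset.Ico 0 i, (if j < i then s else if j < r then t else 1)) = i * s := by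
    have hcongr : ∀ j ∈ Finset.Ico 0 i, (if j < i then s else if j < r then t else 1) = s := by
      intro j hj
      simp only [Finset.mem_Ico] at hj
      rw [if_pos hj.2]
    rw [Finset.sum_congr rfl hcongr, Finset.sum_const, Nat.card_Ico, smul_eq_mul,
      Nat.sub_zero]
  have e2 : (∑ j ∈ Finset.Ico i r, (if j < i then s else if j < r then t else 1))
      = (r - i) * t := by
    have hcongr : ∀ j ∈ Finset.Ico i r, (if j < i then s else if j < r then t else 1) = t := by
      intro j hj
      simp only [Finset.mem_Ico] at hj
      rw [if_neg (by omega), if_pos hj.2]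
    rw [Finset.sum_congr rfl hcongr, Finset.sum_const, Nat.card_Ico, smul_eq_mul]
  have e3 : (∑ j ∈ Finset.Ico r k, (if j < i then s else if j < r then t else 1))
      = (k - r) := by
    have hcongr : ∀ j ∈ Finset.Ico r k, (if j < i then s else if j < r then t else 1) = 1 := by
      intro j hj
      simp only [Finset.mem_Ico] at hj
      rw [if_neg (by omega), if_neg (by omega)]
    rw [Finset.sum_congr rfl hcongr, Finset.sum_const, Nat.card_Ico, smul_eq_mul, mul_one]
  rw [e1, e2, e3]

/-- Base-`s` uniqueness of three-digit representations. -/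
lemma base_s_inj {s a b c a' b' c' : ℕ} (ha : a < s) (hb : b < s) (hc : c < s)
    (ha' : a' < s) (hb' : b' < s) (hc' : c' < s)
    (h : a + b * s + c * (s * s) = a' + b' * s + c' * (s * s)) :
    a = a' ∧ b = b' ∧ c = c' := by
  have hs : 0 < s := by omega
  have h' : a + s * (b + s * c) = a' + s * (b' + s * c') := by
    rw [show a + s * (b + s * c) = a + b * s + c * (s * s) from by ring,
      show a' + s * (b' + s * c') = a' + b' * s + c' * (s * s) from by ring]
    exact h
  have hmod : a = a' := by
    have := congrArg (· % s) h'
    simpa [Nat.add_mul_mod_self_left, Nat.mul_comm s (b + s * c), Nat.mul_comm s (b' + s * c'),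
      Nat.add_mul_mod_self_right, Nat.mod_eq_of_lt ha, Nat.mod_eq_of_lt ha'] using this
  subst hmod
  have h2 : b + s * c = b' + s * c' := by
    have := Nat.add_left_cancel h'
    exact Nat.eq_of_mul_eq_mul_left hs this
  have hb2 : b = b' := by
    have := congrArg (· % s) h2
    simpa [Nat.mul_comm s c, Nat.mul_comm s c', Nat.add_mul_mod_self_right,
      Nat.mod_eq_of_lt hb, Nat.mod_eq_of_lt hb'] using this
  subst hb2
  have h3 : c = c' := by
    have := Nat.add_left_cancel h2
    exact Nat.eq_of_mul_eq_mul_left hs this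
  exact ⟨rfl, rfl, h3⟩

/-- the complete graph on `(k+2).choose 2` vertices with `k` pendant leaves
attached to each vertex has sigma chromatic number at most `3`. -/
theorem leafy_sigmaChrom_le_three (k : ℕ) :
    sigmaChrom (leafy k ((k + 2).choose 2)) ≤ 3 := by
  set N := (k + 2).choose 2 with hN
  have hNT : N = triT (k + 1) := (triT_succ_eq_choose k).symm
  set s := k + 1 with hs
  -- the row and column indices of a clique vertex
  set ri : Fin N → ℕ := fun a => (triF (a : ℕ)).1 with hri
  set ii : Fin N → ℕ := fun a => (triF (a : ℕ)).2 with hii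
  have hrk : ∀ a : Fin N, ri a ≤ k := fun a => triF_fst_le (by rw [← hNT]; exact a.2)
  have hir : ∀ a : Fin N, ii a ≤ ri a := fun a => (triF_spec a).1
  -- the coloring
  set c : Fin N ⊕ Fin N × Fin k → ℕ := fun v =>
    match v with
    | Sum.inl _ => 1
    | Sum.inr (a, j) => if (j : ℕ) < ii a then s else if (j : ℕ) < ri a then s * s else 1
    with hc
  -- the leaf-sum of a clique vertex
  have hL : ∀ a : Fin N, (∑ j : Fin k, c (Sum.inr (a, j)))
      = ii a * s + (ri a - ii a) * (s * s) + (k - ri a) := by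
    intro a
    have hrw : (∑ j : Fin k, c (Sum.inr (a, j)))
        = ∑ j ∈ Finset.range k, (if j < ii a then s else if j < ri a then s * s else 1) :=
      Fin.sum_univ_eq_sum_range (fun n => if n < ii a then s else if n < ri a then s * s else 1) k
    rw [hrw]
    exact sum_step _ _ _ _ _ (hir a) (hrk a)
  -- leaf sums are injective
  have hLinj : ∀ a b : Fin N,
      (∑ j : Fin k, c (Sum.inr (a, j))) = (∑ j : Fin k, c (Sum.inr (b, j))) → a = b := by
    intro a b hab
    rw [hL, hL] at hab
    have h1 : k - ri a + ii a * s + (ri a - ii a) * (s * s)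
        = k - ri b + ii b * s + (ri b - ii b) * (s * s) := by omega
    obtain ⟨e1, e2, e3⟩ := base_s_inj (s := s)
      (by have := hrk a; omega) (by have := hir a; have := hrk a; omega)
      (by have := hir a; have := hrk a; omega)
      (by have := hrk b; omega) (by have := hir b; have := hrk b; omega)
      (by have := hir b; have := hrk b; omega) h1
    have hra : ri a = ri b := by have := hrk a; have := hrk b; omega
    have hia : ii a = ii b := e2
    have : triF (a : ℕ) = triF (b : ℕ) := by
      have h1 := hra; have h2 := hia
      simp only [hri, hii] at h1 h2
      exact Prod.ext h1 h2
    exact Fin.ext (triF_inj this)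
  -- adjacency characterizations
  have adj_ll : ∀ a b : Fin N, (leafy k N).Adj (Sum.inl a) (Sum.inl b) ↔ a ≠ b := by
    intro a b
    simp only [leafy, SimpleGraph.fromRel_adj]
    constructor
    · rintro ⟨h, -⟩ rfl; exact h rfl
    · intro h; exact ⟨by simpa using h, Or.inl trivial⟩
  have adj_lr : ∀ (a b : Fin N) (j : Fin k),
      (leafy k N).Adj (Sum.inl a) (Sum.inr (b, j)) ↔ a = b := by
    intro a b j
    simp only [leafy, SimpleGraph.fromRel_adj]
    constructor
    · rintro ⟨-, h | h⟩
      · exact h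
      · exact absurd h not_false
    · intro h; exact ⟨by simp, Or.inl h⟩
  have adj_rr : ∀ (a b : Fin N) (j l : Fin k),
      ¬ (leafy k N).Adj (Sum.inr (a, j)) (Sum.inr (b, l)) := by
    intro a b j l
    simp only [leafy, SimpleGraph.fromRel_adj]
    rintro ⟨-, h | h⟩ <;> exact h
  -- neighborhood sums
  have sum_nbr : ∀ v, (∑ w ∈ (leafy k N).neighborFinset v, c w)
      = ∑ w : Fin N ⊕ Fin N × Fin k, if (leafy k N).Adj v w then c w else 0 := by
    intro v
    rw [← Finset.sum_filter]
    apply Finset.sum_congr _ (fun _ _ => rfl)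
    ext w
    simp [SimpleGraph.mem_neighborFinset]
  have sum_inl : ∀ a : Fin N, (∑ w ∈ (leafy k N).neighborFinset (Sum.inl a), c w)
      = (N - 1) + ∑ j : Fin k, c (Sum.inr (a, j)) := by
    intro a
    rw [sum_nbr, Fintype.sum_sum_type]
    have e1 : (∑ b : Fin N, if (leafy k N).Adj (Sum.inl a) (Sum.inl b)
        then c (Sum.inl b) else 0) = N - 1 := by
      have key : (∑ b : Fin N, if (leafy k N).Adj (Sum.inl a) (Sum.inl b)
          then c (Sum.inl b) else 0) + 1 = N := by
        have : (∑ b : Fin N, ((if (leafy k N).Adj (Sum.inl a) (Sum.inl b)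
            then c (Sum.inl b) else 0) + (if a = b then 1 else 0))) = ∑ _b : Fin N, 1 := by
          apply Finset.sum_congr rfl
          intro b _
          by_cases hb : a = b
          · rw [if_pos hb, if_neg (by rw [adj_ll]; simpa using hb)]
          · rw [if_neg hb, if_pos (by rw [adj_ll]; exact hb)]
        rw [Finset.sum_add_distrib, Finset.sum_ite_eq] at this
        simpa using this
      omega
    have e2 : (∑ p : Fin N × Fin k, if (leafy k N).Adj (Sum.inl a) (Sum.inr p)
        then c (Sum.inr p) else 0) = ∑ j : Fin k, c (Sum.inr (a, j)) := by
      rw [Fintype.sum_prod_type]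
      have : ∀ b : Fin N, (∑ j : Fin k, if (leafy k N).Adj (Sum.inl a) (Sum.inr (b, j))
          then c (Sum.inr (b, j)) else 0)
          = if a = b then (∑ j : Fin k, c (Sum.inr (b, j))) else 0 := by
        intro b
        by_cases hb : a = b
        · rw [if_pos hb]
          apply Finset.sum_congr rfl
          intro j _
          rw [if_pos ((adj_lr a b j).mpr hb)]
        · rw [if_neg hb]
          apply Finset.sum_eq_zero
          intro j _
          rw [if_neg (fun h => hb ((adj_lr a b j).mp h))]
      rw [Finset.sum_congr rfl (fun b _ => this b), Finset.sum_ite_eq]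
      simp
    rw [e1, e2]
  have sum_inr : ∀ (a : Fin N) (j : Fin k),
      (∑ w ∈ (leafy k N).neighborFinset (Sum.inr (a, j)), c w) = 1 := by
    intro a j
    rw [sum_nbr, Fintype.sum_sum_type]
    have e1 : (∑ b : Fin N, if (leafy k N).Adj (Sum.inr (a, j)) (Sum.inl b)
        then c (Sum.inl b) else 0) = 1 := by
      have : ∀ b : Fin N, (if (leafy k N).Adj (Sum.inr (a, j)) (Sum.inl b)
          then c (Sum.inl b) else 0) = if a = b then 1 else 0 := by
        intro b
        have : (leafy k N).Adj (Sum.inr (a, j)) (Sum.inl b) ↔ a = b := by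
          rw [(leafy k N).adj_comm, adj_lr, eq_comm]
        by_cases hb : a = b
        · rw [if_pos (this.mpr hb), if_pos hb]
        · rw [if_neg (fun h => hb (this.mp h)), if_neg hb]
      rw [Finset.sum_congr rfl (fun b _ => this b), Finset.sum_ite_eq]
      simp
    have e2 : (∑ p : Fin N × Fin k, if (leafy k N).Adj (Sum.inr (a, j)) (Sum.inr p)
        then c (Sum.inr p) else 0) = 0 := by
      apply Finset.sum_eq_zero
      rintro ⟨b, l⟩ _
      rw [if_neg (adj_rr a b j l)]
    rw [e1, e2]
  -- the coloring is a sigma coloring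
  have hsig : IsSigmaColoring (leafy k N) c := by
    constructor
    · rintro (a | ⟨a, j⟩)
      · exact Nat.one_pos
      · simp only [hc]
        split
        · omega
        · split
          · positivity
          · exact Nat.one_pos
    · rintro (a | ⟨a, j⟩) (b | ⟨b, l⟩) hadj
      · -- clique-clique
        rw [sum_inl, sum_inl]
        intro h
        have hne : a ≠ b := (adj_ll a b).mp hadj
        exact hne (hLinj a b (by omega))
      · -- clique-leaf
        rw [sum_inl, sum_inr]
        have hk1 : 1 ≤ k := l.pos.trans_le (by omega)
        have hN3 : 3 ≤ N := by
          calc 3 = (3).choose 2 := rfl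
          _ ≤ (k + 2).choose 2 := Nat.choose_le_choose 2 (by omega)
        omega
      · -- leaf-clique
        rw [sum_inl, sum_inr]
        have hk1 : 1 ≤ k := j.pos.trans_le (by omega)
        have hN3 : 3 ≤ N := by
          calc 3 = (3).choose 2 := rfl
          _ ≤ (k + 2).choose 2 := Nat.choose_le_choose 2 (by omega)
        omega
      · exact absurd hadj (adj_rr a b j l)
  -- at most three colors
  have hsub : (Finset.univ.image c) ⊆ {1, s, s * s} := by
    intro x hx
    simp only [Finset.mem_image] at hx
    obtain ⟨v, -, rfl⟩ := hx
    rcases v with a | ⟨a, j⟩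
    · simp [hc]
    · simp only [hc, Finset.mem_insert, Finset.mem_singleton]
      split
      · tauto
      · split
        · tauto
        · tauto
  have hcard : (Finset.univ.image c).card ≤ 3 := by
    calc (Finset.univ.image c).card ≤ ({1, s, s * s} : Finset ℕ).card :=
          Finset.card_le_card hsub
    _ ≤ 3 := by
        apply le_trans (Finset.card_insert_le _ _)
        have : ({s, s * s} : Finset ℕ).card ≤ 2 := by
          apply le_trans (Finset.card_insert_le _ _)
          simp
        omega
  exact le_trans (Nat.sInf_le ⟨c, hsig, rfl⟩) hcard
end

section
/- Let G be the graph obtained from the complete graph on (k+2 choose 2) vertices by attaching k pendant leaves to each vertex of the complete graph. Then the lucky number of G is at least k/2. -/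
open Finset
open scoped Classical

lemma leafy_nbr_inl (k N : ℕ) (a : Fin N) :
    (leafy k N).neighborFinset (Sum.inl a) =
      (Finset.univ.erase a).image Sum.inl ∪ Finset.univ.image (fun j : Fin k => Sum.inr (a, j)) := by
  ext w
  cases w with
  | inl b => rw [SimpleGraph.mem_neighborFinset]; simp [leafy, SimpleGraph.mem_neighborFinset, eq_comm, ne_comm]
  | inr p => obtain ⟨b, j⟩ := p; rw [SimpleGraph.mem_neighborFinset]; simp [leafy, SimpleGraph.mem_neighborFinset, eq_comm]

lemma leafy_nbr_inr (k N : ℕ) (a : Fin N) (j : Fin k) :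
    (leafy k N).neighborFinset (Sum.inr (a, j)) = {Sum.inl a} := by
  ext w
  cases w with
  | inl b => rw [SimpleGraph.mem_neighborFinset]; simp [leafy, SimpleGraph.mem_neighborFinset, eq_comm]
  | inr p => obtain ⟨b, i⟩ := p; rw [SimpleGraph.mem_neighborFinset]; simp [leafy, SimpleGraph.mem_neighborFinset]

lemma leafy_sum_inl (k N : ℕ) (ℓ : Fin N ⊕ Fin N × Fin k → ℕ) (a : Fin N) :
    ∑ w ∈ (leafy k N).neighborFinset (Sum.inl a), ℓ w =
      ∑ b ∈ Finset.univ.erase a, ℓ (Sum.inl b) + ∑ j : Fin k, ℓ (Sum.inr (a, j)) := by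
  rw [leafy_nbr_inl, Finset.sum_union, Finset.sum_image (by simp),
    Finset.sum_image (by intro i _ j _ h; simpa using h)]
  rw [Finset.disjoint_left]
  rintro w hw hw'
  simp only [Finset.mem_image] at hw hw'
  obtain ⟨b, -, rfl⟩ := hw
  obtain ⟨j, -, h⟩ := hw'
  exact Sum.inl_ne_inr h.symm

lemma two_mul_choose_two (n : ℕ) : 2 * ((n + 2).choose 2) = (n + 2) * (n + 1) := by
  rw [Nat.choose_two_right, Nat.succ_sub_one]
  have h : Even ((n + 2) * (n + 1)) := by
    rcases Nat.even_or_odd n with h | h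
    · exact (h.add_one.add_one).mul_right _
    · exact (h.add_one).mul_left _
  obtain ⟨m, hm⟩ := h
  omega

lemma choose_two_pos (n : ℕ) : 0 < (n + 2).choose 2 := by
  have := two_mul_choose_two n
  nlinarith

lemma leafy_label_bound (k m N : ℕ) (h2N0 : 2 * N = (k + 2) * (k + 1))
    (lab : Fin N ⊕ Fin N × Fin k → ℕ)
    (hr : ∀ v, lab v ∈ Finset.Icc 1 m)
    (hl : IsLuckyLabeling (leafy k N) lab) :
    k ≤ 2 * m := by
  have hN1 : 0 < N := by nlinarith
  have hm1 : 1 ≤ m := by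
    have := hr (Sum.inl ⟨0, hN1⟩)
    simp [Finset.mem_Icc] at this
    omega
  set f : Fin N → ℤ := fun a =>
    (∑ j : Fin k, (lab (Sum.inr (a, j)) : ℤ)) - (lab (Sum.inl a) : ℤ) with hf
  have hinj : Function.Injective f := by
    intro a b hab
    by_contra hne
    have hadj : (leafy k N).Adj (Sum.inl a) (Sum.inl b) := by simp [leafy, hne]
    apply hl _ _ hadj
    rw [leafy_sum_inl, leafy_sum_inl]
    have hS : ∀ c : Fin N, ((∑ x ∈ Finset.univ.erase c, lab (Sum.inl x) : ℕ) : ℤ)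
        = (∑ x : Fin N, (lab (Sum.inl x) : ℤ)) - lab (Sum.inl c) := by
      intro c
      push_cast
      rw [Finset.sum_erase_eq_sub (Finset.mem_univ c)]
    have hab' : (∑ j : Fin k, (lab (Sum.inr (a, j)) : ℤ)) - (lab (Sum.inl a) : ℤ)
        = (∑ j : Fin k, (lab (Sum.inr (b, j)) : ℤ)) - (lab (Sum.inl b) : ℤ) := hab
    have key : ((∑ x ∈ Finset.univ.erase a, lab (Sum.inl x) + ∑ j : Fin k, lab (Sum.inr (a, j)) : ℕ) : ℤ)
        = ((∑ x ∈ Finset.univ.erase b, lab (Sum.inl x) + ∑ j : Fin k, lab (Sum.inr (b, j)) : ℕ) : ℤ) := by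
      push_cast
      have ha := hS a; have hb := hS b
      push_cast at ha hb
      rw [ha, hb]
      linarith
    exact_mod_cast key
  have hmem : ∀ a : Fin N, f a ∈ Finset.Icc ((k : ℤ) - m) ((k : ℤ) * m - 1) := by
    intro a
    have hL1 : (k : ℤ) ≤ ∑ j : Fin k, (lab (Sum.inr (a, j)) : ℤ) := by
      calc (k : ℤ) = ∑ _j : Fin k, (1 : ℤ) := by simp
      _ ≤ _ := Finset.sum_le_sum (fun j _ => by
          have h := hr (Sum.inr (a, j)); simp [Finset.mem_Icc] at h; exact_mod_cast h.1)
    have hL2 : ∑ j : Fin k, (lab (Sum.inr (a, j)) : ℤ) ≤ (k : ℤ) * m := by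
      calc _ ≤ ∑ _j : Fin k, (m : ℤ) := Finset.sum_le_sum (fun j _ => by
          have h := hr (Sum.inr (a, j)); simp [Finset.mem_Icc] at h; exact_mod_cast h.2)
      _ = (k : ℤ) * m := by simp [mul_comm]
    have hv := hr (Sum.inl a)
    simp [Finset.mem_Icc] at hv
    have hv1 : (1 : ℤ) ≤ lab (Sum.inl a) := by exact_mod_cast hv.1
    have hv2 : (lab (Sum.inl a) : ℤ) ≤ m := by exact_mod_cast hv.2
    simp only [hf, Finset.mem_Icc]
    constructor <;> linarith
  have hcard : N ≤ (Finset.Icc ((k : ℤ) - m) ((k : ℤ) * m - 1)).card := by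
    have := Finset.card_le_card_of_injOn (s := Finset.univ) f (fun a _ => hmem a) (hinj.injOn)
    simpa using this
  rw [Int.card_Icc] at hcard
  have hNle : (N : ℤ) ≤ (k : ℤ) * m - 1 + 1 - ((k : ℤ) - m) := by
    have hnn : (0 : ℤ) ≤ (k : ℤ) * m - 1 + 1 - ((k : ℤ) - m) := by
      have hm1' : (1 : ℤ) ≤ m := by exact_mod_cast hm1
      nlinarith [Int.ofNat_nonneg k]
    calc (N : ℤ) ≤ ((( (k : ℤ) * m - 1 + 1 - ((k : ℤ) - m)).toNat : ℤ)) := by exact_mod_cast hcard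
    _ = _ := Int.toNat_of_nonneg hnn
  have h2N : 2 * (N : ℤ) = ((k : ℤ) + 2) * ((k : ℤ) + 1) := by exact_mod_cast h2N0
  by_contra hcon
  push_neg at hcon
  have hcon' : 2 * (m : ℤ) + 1 ≤ (k : ℤ) := by exact_mod_cast hcon
  nlinarith [Int.ofNat_nonneg k, Int.ofNat_nonneg m]

lemma leafy_nonempty (k N : ℕ) (hk : 1 ≤ k) (hN : 3 ≤ N) :
    ∃ lab : Fin N ⊕ Fin N × Fin k → ℕ,
      (∀ v, lab v ∈ Finset.Icc 1 N) ∧ IsLuckyLabeling (leafy k N) lab := by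
  refine ⟨Sum.elim (fun _ => 1) (fun p => p.1.val + 1), ?_, ?_⟩
  · rintro (a | ⟨a, j⟩) <;> simp [Finset.mem_Icc] <;> omega
  · have hsum_inl : ∀ a : Fin N,
        ∑ w ∈ (leafy k N).neighborFinset (Sum.inl a),
          Sum.elim (fun _ => 1) (fun p : Fin N × Fin k => p.1.val + 1) w
          = (N - 1) + k * (a.val + 1) := by
      intro a
      rw [leafy_sum_inl]
      simp [Finset.card_erase_of_mem]
    have hsum_inr : ∀ (a : Fin N) (j : Fin k),
        ∑ w ∈ (leafy k N).neighborFinset (Sum.inr (a, j)),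
          Sum.elim (fun _ => 1) (fun p : Fin N × Fin k => p.1.val + 1) w = 1 := by
      intro a j
      rw [leafy_nbr_inr]
      simp
    rintro (a | ⟨a, i⟩) (b | ⟨b, j⟩) hadj
    · have hne : a ≠ b := by
        intro h; subst h; exact (leafy k N).loopless.irrefl _ hadj
      rw [hsum_inl, hsum_inl]
      have hval : a.val ≠ b.val := fun h => hne (Fin.ext h)
      intro h
      have : a.val + 1 = b.val + 1 := Nat.eq_of_mul_eq_mul_left hk (by omega)
      omega
    · rw [hsum_inl, hsum_inr]
      omega
    · rw [hsum_inr, hsum_inl]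
      omega
    · exact absurd hadj (by simp [leafy])

/-- the complete graph on `(k+2).choose 2` vertices with `k` pendant leaves
attached to each vertex has lucky number at least `k / 2`. -/
theorem leafy_luckyNum_ge (k : ℕ) :
    (k : ℝ) / 2 ≤ (luckyNum (leafy k ((k + 2).choose 2)) : ℝ) := by
  rcases Nat.eq_zero_or_pos k with rfl | hk
  · simp
  · have h2N := two_mul_choose_two k
    have hN3 : 3 ≤ (k + 2).choose 2 := by nlinarith
    obtain ⟨lab, hr, hl⟩ :=
      Nat.sInf_mem (⟨(k + 2).choose 2, leafy_nonempty k _ hk hN3⟩ :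
        {m | ∃ lab, (∀ v, lab v ∈ Finset.Icc 1 m) ∧
          IsLuckyLabeling (leafy k ((k + 2).choose 2)) lab}.Nonempty)
    have hb := leafy_label_bound k (luckyNum (leafy k ((k + 2).choose 2))) _ h2N lab hr hl
    rw [div_le_iff₀ (by norm_num : (0 : ℝ) < 2)]
    have hb' : k ≤ luckyNum (leafy k ((k + 2).choose 2)) * 2 := by omega
    exact_mod_cast hb'
end

section
/- In any sigma coloring of the triangle K₃ whose three vertices each additionally receive contributions from one external neighbor, if all three external neighbors have equal labels then no valid 2-label sigma coloring of the triangle vertices exists; hence in the reduction graph, for each clause gadget (a triangle attached to three literal vertices), the three attached literal vertices cannot all have the same label. -/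
open Finset
open scoped Classical

/-- in a 3-regular graph containing a triangle `c₁c₂c₃` where each `cᵢ` has
exactly one neighbor `yᵢ` outside the triangle, for any lucky labeling with labels `{1,2}`
the three external neighbors `y₁, y₂, y₃` cannot all have the same label. -/
theorem clause_gadget_not_all_equal {V : Type*} [Fintype V] (G : SimpleGraph V)
    (hreg : G.IsRegularOfDegree 3)
    (c₁ c₂ c₃ y₁ y₂ y₃ : V)
    (hc : c₁ ≠ c₂ ∧ c₁ ≠ c₃ ∧ c₂ ≠ c₃)
    (hy : y₁ ∉ ({c₁, c₂, c₃} : Set V) ∧ y₂ ∉ ({c₁, c₂, c₃} : Set V) ∧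
      y₃ ∉ ({c₁, c₂, c₃} : Set V))
    (hn₁ : G.neighborFinset c₁ = {c₂, c₃, y₁})
    (hn₂ : G.neighborFinset c₂ = {c₁, c₃, y₂})
    (hn₃ : G.neighborFinset c₃ = {c₁, c₂, y₃})
    (ℓ : V → ℕ) (hval : ∀ v, ℓ v = 1 ∨ ℓ v = 2) (hl : IsLuckyLabeling G ℓ) :
    ¬ (ℓ y₁ = ℓ y₂ ∧ ℓ y₂ = ℓ y₃) := by
  rintro ⟨h12, h23⟩
  obtain ⟨hc12, hc13, hc23⟩ := hc
  obtain ⟨hy1, hy2, hy3⟩ := hy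
  simp only [Set.mem_insert_iff, Set.mem_singleton_iff, not_or] at hy1 hy2 hy3
  have a12 : G.Adj c₁ c₂ := by
    rw [← SimpleGraph.mem_neighborFinset, hn₁]; simp
  have a13 : G.Adj c₁ c₃ := by
    rw [← SimpleGraph.mem_neighborFinset, hn₁]; simp
  have a23 : G.Adj c₂ c₃ := by
    rw [← SimpleGraph.mem_neighborFinset, hn₂]; simp
  have s1 : ∑ w ∈ G.neighborFinset c₁, ℓ w = ℓ c₂ + ℓ c₃ + ℓ y₁ := by
    rw [hn₁]
    rw [Finset.sum_insert (by simp [hc23, (Ne.symm hy1.2.1), (Ne.symm hy1.2.2)]),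
        Finset.sum_insert (by simp [(Ne.symm hy1.2.2)]), Finset.sum_singleton]
    ring
  have s2 : ∑ w ∈ G.neighborFinset c₂, ℓ w = ℓ c₁ + ℓ c₃ + ℓ y₂ := by
    rw [hn₂]
    rw [Finset.sum_insert (by simp [hc13, (Ne.symm hy2.1), (Ne.symm hy2.2.2)]),
        Finset.sum_insert (by simp [(Ne.symm hy2.2.2)]), Finset.sum_singleton]
    ring
  have s3 : ∑ w ∈ G.neighborFinset c₃, ℓ w = ℓ c₁ + ℓ c₂ + ℓ y₃ := by
    rw [hn₃]
    rw [Finset.sum_insert (by simp [hc12, (Ne.symm hy3.1), (Ne.symm hy3.2.1)]),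
        Finset.sum_insert (by simp [(Ne.symm hy3.2.1)]), Finset.sum_singleton]
    ring
  have d12 := hl _ _ a12
  have d13 := hl _ _ a13
  have d23 := hl _ _ a23
  rw [s1, s2] at d12
  rw [s1, s3] at d13
  rw [s2, s3] at d23
  rcases hval c₁ with h1 | h1 <;> rcases hval c₂ with h2 | h2 <;>
    rcases hval c₃ with h3 | h3 <;> omega
end

section
/- Let G be a graph and c a sigma coloring of G with exactly σ(G) distinct labels. If K is a set of pairwise adjacent vertices of G all having equal closed neighborhoods (i.e., N[u] = N[v] for all u, v ∈ K), then all vertices of K receive pairwise distinct labels; consequently σ(G) ≥ |K|. -/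
open Finset
open scoped Classical

/-- if `c` is a sigma coloring of `G` with exactly `σ(G)` labels and `K` is a
set of pairwise adjacent vertices with pairwise equal closed neighborhoods, then `c` is
injective on `K`, and consequently `σ(G) ≥ |K|`. -/
theorem sigma_injOn_clique_of_closedNbhd_eq {V : Type*} [Fintype V] (G : SimpleGraph V)
    (c : V → ℕ) (hc : IsSigmaColoring G c)
    (hcard : (Finset.univ.image c).card = sigmaChrom G)
    (K : Finset V)
    (hadj : ∀ u ∈ K, ∀ v ∈ K, u ≠ v → G.Adj u v)
    (hN : ∀ u ∈ K, ∀ v ∈ K,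
      insert u (G.neighborFinset u) = insert v (G.neighborFinset v)) :
    Set.InjOn c (K : Set V) ∧ K.card ≤ sigmaChrom G := by
  have hinj : Set.InjOn c (K : Set V) := by
    intro u hu v hv hcu
    by_contra hne
    have hA := hadj u hu v hv hne
    have hNeq := hN u hu v hv
    have h1 : c u + ∑ w ∈ G.neighborFinset u, c w
        = c v + ∑ w ∈ G.neighborFinset v, c w := by
      rw [← Finset.sum_insert (by simp), ← Finset.sum_insert (by simp), hNeq]
    exact hc.2 u v hA (by omega)
  refine ⟨hinj, ?_⟩
  rw [← hcard]
  calc K.card = (K.image c).card := (Finset.card_image_of_injOn hinj).symm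
    _ ≤ (Finset.univ.image c).card :=
        Finset.card_le_card (Finset.image_subset_image (Finset.subset_univ K))
end

section
/- Let G be a graph and suppose v₁, ..., v_{k-1} and a vertex family {y_{βγ}} form the gadget where each clique K_{k²−k+1} has vertices partitioned so that row β (1 ≤ β ≤ k−1) of k−1 vertices is joined to vᵦ. In any sigma coloring of the full construction graph G** with exactly k labels, the vertices v₁, ..., v_{k−1} receive pairwise distinct labels. -/
open Finset
open scoped Classical

/-- Property A of the construction `G**`: `Y` is the vertex set of one of
the cliques `K_{k²−k+1}`, `y (β, γ)` (for `1 ≤ β, γ ≤ k−1`, here `0`-indexed) is the `γ`-th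
vertex of row `β` of the clique, and each vertex of row `β` is joined to the external vertex
`v β`; i.e. the neighborhood of `y (β, γ)` is exactly the rest of the clique together with
`v β`.  In any sigma coloring of the construction graph with exactly `k` labels, the
vertices `v 0, …, v (k-2)` receive pairwise distinct labels. -/
theorem external_vertices_distinct_labels {V : Type*} [Fintype V] (G : SimpleGraph V)
    (k : ℕ) (hk : 3 ≤ k)
    (c : V → ℕ) (hc : IsSigmaColoring G c) (hcard : (Finset.univ.image c).card = k)
    (v : Fin (k - 1) → V) (hvinj : Function.Injective v)
    (Y : Finset V) (hYcard : Y.card = k ^ 2 - k + 1)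
    (y : Fin (k - 1) × Fin (k - 1) → V) (hyinj : Function.Injective y)
    (hyY : ∀ p, y p ∈ Y) (hvY : ∀ β, v β ∉ Y)
    (hnb : ∀ β γ : Fin (k - 1),
      G.neighborFinset (y (β, γ)) = Y.erase (y (β, γ)) ∪ {v β}) :
    Function.Injective (fun β => c (v β)) := by
  intro β₁ β₂ hEq
  by_contra hne
  replace hEq : c (v β₁) = c (v β₂) := hEq
  -- neighborhood sum formula
  have hS : ∀ p : Fin (k-1) × Fin (k-1),
      ∑ w ∈ G.neighborFinset (y p), c w = (∑ w ∈ Y.erase (y p), c w) + c (v p.1) := by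
    rintro ⟨a, b⟩
    rw [hnb a b, Finset.sum_union]
    · simp
    · simp only [Finset.disjoint_singleton_right]
      exact fun h => hvY a (Finset.mem_of_mem_erase h)
  -- key: labels of y-vertices in rows β₁, β₂ are pairwise distinct
  have key : ∀ p q : Fin (k-1) × Fin (k-1), (p.1 = β₁ ∨ p.1 = β₂) →
      (q.1 = β₁ ∨ q.1 = β₂) → p ≠ q → c (y p) ≠ c (y q) := by
    intro p q hp hq hpq hc'
    have hyne : y p ≠ y q := fun h => hpq (hyinj h)
    have hadj : G.Adj (y p) (y q) := by
      rw [← SimpleGraph.mem_neighborFinset]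
      have := hnb p.1 p.2
      rw [Prod.mk.eta] at this
      rw [this]
      exact Finset.mem_union_left _ (Finset.mem_erase.mpr ⟨hyne.symm, hyY q⟩)
    apply hc.2 _ _ hadj
    rw [hS p, hS q]
    have hv : c (v p.1) = c (v q.1) := by
      rcases hp with h | h <;> rcases hq with h' | h' <;> rw [h, h'] <;> omega
    have h1 := Finset.add_sum_erase Y c (hyY p)
    have h2 := Finset.add_sum_erase Y c (hyY q)
    omega
  -- the finset of those 2(k-1) vertices
  set T : Finset V := (Finset.univ.image fun γ => y (β₁, γ)) ∪
      (Finset.univ.image fun γ => y (β₂, γ)) with hT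
  have hTmem : ∀ x ∈ T, ∃ p : Fin (k-1) × Fin (k-1),
      (p.1 = β₁ ∨ p.1 = β₂) ∧ y p = x := by
    intro x hx
    rw [hT, Finset.mem_union] at hx
    rcases hx with hx | hx <;> obtain ⟨γ, _, hγ⟩ := Finset.mem_image.mp hx
    · exact ⟨(β₁, γ), Or.inl rfl, hγ⟩
    · exact ⟨(β₂, γ), Or.inr rfl, hγ⟩
  have hinjT : Set.InjOn c T := by
    intro a ha b hb hab
    by_contra hne'
    obtain ⟨p, hp, rfl⟩ := hTmem a ha
    obtain ⟨q, hq, rfl⟩ := hTmem b hb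
    exact key p q hp hq (fun h => hne' (by rw [h])) hab
  have hinj1 : Function.Injective fun γ : Fin (k-1) => y (β₁, γ) :=
    fun a b h => by simpa using (Prod.mk.injEq _ _ _ _ ▸ hyinj h).2
  have hinj2 : Function.Injective fun γ : Fin (k-1) => y (β₂, γ) :=
    fun a b h => by simpa using (Prod.mk.injEq _ _ _ _ ▸ hyinj h).2
  have hdisj : Disjoint (Finset.univ.image fun γ => y (β₁, γ))
      (Finset.univ.image fun γ => y (β₂, γ)) := by
    rw [Finset.disjoint_left]
    intro x hx1 hx2
    obtain ⟨a, _, ha⟩ := Finset.mem_image.mp hx1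
    obtain ⟨b, _, hb⟩ := Finset.mem_image.mp hx2
    have := hyinj (ha.trans hb.symm)
    exact hne (congrArg Prod.fst this)
  have hk1 : 2 ≤ k - 1 := by omega
  have hTcard : T.card = 2 * (k - 1) := by
    rw [hT, Finset.card_union_of_disjoint hdisj,
      Finset.card_image_of_injective _ hinj1, Finset.card_image_of_injective _ hinj2]
    simp [two_mul]
  have hle : T.card ≤ k := by
    calc T.card = (T.image c).card := (Finset.card_image_of_injOn hinjT).symm
    _ ≤ (Finset.univ.image c).card :=
        Finset.card_le_card (Finset.image_subset_image (Finset.subset_univ T))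
    _ = k := hcard
  omega
end

section
/- Let C be an odd cycle v₁v₂...v_{2m+1}. For any function ℓ : V(C) → {a, b} with a ≠ b, there exist two adjacent vertices whose neighborhood sums (sum of ℓ over their two cycle-neighbors) are equal. -/
/-- on an odd cycle `v₁ v₂ … v_{2m+1}` (vertices indexed by `ZMod (2m+1)`,
each vertex `i` having neighbors `i − 1` and `i + 1`), for any labeling `ℓ` taking only the
two distinct values `a` and `b`, some two adjacent vertices `i` and `i + 1` have equal
neighborhood sums. -/
theorem oddCycle_two_labels_equal_sums (m : ℕ) (hm : 1 ≤ m) (a b : ℕ) (hab : a ≠ b)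
    (ℓ : ZMod (2 * m + 1) → ℕ) (hval : ∀ v, ℓ v = a ∨ ℓ v = b) :
    ∃ i : ZMod (2 * m + 1), ℓ (i - 1) + ℓ (i + 1) = ℓ i + ℓ (i + 2) := by
  by_contra hcon
  push_neg at hcon
  haveI : Fact (1 < 2 * m + 1) := ⟨by omega⟩
  -- F1 : no two consecutive "equal" edges with a shift of 2
  have F1 : ∀ i : ZMod (2 * m + 1), ¬(ℓ i = ℓ (i + 1) ∧ ℓ (i + 2) = ℓ (i + 3)) := by
    intro i ⟨h1, h2⟩
    apply hcon (i + 1)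
    have e1 : (i + 1) - 1 = i := by ring
    have e2 : (i + 1) + 1 = i + 2 := by ring
    have e3 : (i + 1) + 2 = i + 3 := by ring
    rw [e1, e2, e3, h1, h2]
  -- F2 : each "equal" edge has a neighboring "equal" edge
  have F2 : ∀ i : ZMod (2 * m + 1), ℓ i = ℓ (i + 1) →
      (ℓ (i - 1) = ℓ i ∨ ℓ (i + 1) = ℓ (i + 2)) := by
    intro i hy
    by_contra hc2
    push_neg at hc2
    obtain ⟨h1, h2⟩ := hc2
    apply hcon i
    rcases hval (i - 1) with h | h <;> rcases hval i with h' | h' <;>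
      rcases hval (i + 1) with h'' | h'' <;> rcases hval (i + 2) with h''' | h''' <;> omega
  classical
  set S : Finset (ZMod (2 * m + 1)) :=
    Finset.univ.filter (fun i => ℓ i = ℓ (i + 1)) with hS
  -- Parity: the number of "unequal" edges is even, so |S| is odd.
  set f : ZMod (2 * m + 1) → ZMod 2 := fun i => if ℓ i = a then 0 else 1 with hf
  have key : ∀ i : ZMod (2 * m + 1),
      f (i + 1) - f i = if ℓ i = ℓ (i + 1) then 0 else 1 := by
    intro i
    rcases hval i with h | h <;> rcases hval (i + 1) with h' | h' <;>
      simp [hf, h, h', hab, Ne.symm hab] <;> decide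
  have tele : ∑ i : ZMod (2 * m + 1), (f (i + 1) - f i) = 0 := by
    rw [Finset.sum_sub_distrib]
    rw [show (∑ i : ZMod (2 * m + 1), f (i + 1)) = ∑ i : ZMod (2 * m + 1), f i from
      Fintype.sum_equiv (Equiv.addRight 1) _ _ (fun i => rfl)]
    exact sub_self _
  have sumT : ∑ i : ZMod (2 * m + 1), (if ℓ i = ℓ (i + 1) then (0 : ZMod 2) else 1) = 0 :=
    (Finset.sum_congr rfl (fun i _ => key i)).symm.trans tele
  have flip : (∑ i : ZMod (2 * m + 1), if ℓ i = ℓ (i + 1) then (0 : ZMod 2) else 1)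
      = ∑ i : ZMod (2 * m + 1), if ¬ ℓ i = ℓ (i + 1) then (1 : ZMod 2) else 0 :=
    Finset.sum_congr rfl (fun i _ => (ite_not _ _ _).symm)
  have cardT : ((Finset.univ.filter (fun i : ZMod (2 * m + 1) => ¬ ℓ i = ℓ (i + 1))).card
      : ZMod 2) = 0 := by
    rw [← Finset.sum_boole, ← flip]
    exact sumT
  have hdvd : 2 ∣ (Finset.univ.filter (fun i : ZMod (2 * m + 1) => ¬ ℓ i = ℓ (i + 1))).card :=
    (ZMod.natCast_eq_zero_iff _ 2).mp cardT
  have hcards : S.card +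
      (Finset.univ.filter (fun i : ZMod (2 * m + 1) => ¬ ℓ i = ℓ (i + 1))).card
      = 2 * m + 1 := by
    rw [hS, Finset.card_filter_add_card_filter_not, Finset.card_univ, ZMod.card]
  have hSodd : ¬ (2 ∣ S.card) := by omega
  -- Involution on S: pair each "equal" edge with its unique neighboring "equal" edge.
  have hone : (1 : ZMod (2 * m + 1)) ≠ 0 := one_ne_zero
  have evenS : ∑ _i ∈ S, (1 : ZMod 2) = 0 := by
    apply Finset.sum_involution
      (g := fun i _ => if ℓ (i + 1) = ℓ (i + 2) then i + 1 else i - 1)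
    · intro i _; decide
    · intro i ha _
      by_cases h : ℓ (i + 1) = ℓ (i + 2)
      · simp only [h, if_pos]
        intro hEq
        exact hone (by rwa [add_eq_left] at hEq)
      · simp only [h, if_neg, if_false]
        intro hEq
        exact hone (by rwa [sub_eq_self] at hEq)
    · intro i ha
      have hyi : ℓ i = ℓ (i + 1) := by
        simpa [hS] using ha
      by_cases h : ℓ (i + 1) = ℓ (i + 2)
      · simp only [h, if_pos]
        have e : i + 1 + 1 = i + 2 := by ring
        simp only [hS, Finset.mem_filter, Finset.mem_univ, true_and, e]
        exact h
      · simp only [h, if_neg, if_false]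
        rcases F2 i hyi with h1 | h1
        · have : ℓ (i - 1) = ℓ ((i - 1) + 1) := by
            rwa [sub_add_cancel]
          simp [hS, this]
        · exact absurd h1 h
    · intro i ha
      have hyi : ℓ i = ℓ (i + 1) := by
        simpa [hS] using ha
      by_cases h : ℓ (i + 1) = ℓ (i + 2)
      · simp only [h, if_pos]
        have hne : ¬ ℓ ((i + 1) + 1) = ℓ ((i + 1) + 2) := by
          have e2 : (i + 1) + 1 = i + 2 := by ring
          have e3 : (i + 1) + 2 = i + 3 := by ring
          rw [e2, e3]
          intro hq
          exact F1 i ⟨hyi, hq⟩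
        rw [if_neg hne, add_sub_cancel_right]
      · simp only [h, if_neg, if_false]
        have hpos : ℓ ((i - 1) + 1) = ℓ ((i - 1) + 2) := by
          have e1 : (i - 1) + 1 = i := by ring
          have e2 : (i - 1) + 2 = i + 1 := by ring
          rw [e1, e2]; exact hyi
        rw [if_pos hpos, sub_add_cancel]
  have : ((S.card : ℕ) : ZMod 2) = 0 := by
    rw [← evenS]; simp
  exact hSodd ((ZMod.natCast_eq_zero_iff _ 2).mp this)
end

section
/- Suppose a graph G with a sigma coloring using labels {α, β} contains, for each of 3n clause-triangles B_c, at least one vertex labeled β, and for each of 3n variable gadgets A_x (each on 46 vertices whose labeling is forced by the label of x, with exactly 16 vertices sharing x's label and 27 plus further vertices otherwise as specified), at least 1/3 of the variables labeled β. Then the number of vertices labeled β is at least 62n, out of 138n total vertices. -/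
open Finset
open scoped Classical

/-- counting bound from the proof of Theorem 4: the graph `G_Φ` has `138 n`
vertices, partitioned into `3 n` clause-triangles `B c` (3 vertices each) and `3 n`
variable gadgets `A x` (43 vertices each).  The labeling `ℓ` (with `true` playing the role
of `β`) satisfies: every triangle contains a `β`-vertex; in gadget `A x` the number of
`β`-vertices is `27` if the variable `x` is labeled `β` (`t x = true`) and `16` otherwise
(the gadget's labeling being forced by the label of `x`, with exactly 16 vertices sharing
`x`'s label and 27 carrying the other); and at least a third of the `3 n` variables are
labeled `β`.  Then at least `62 n` of the `138 n` vertices are labeled `β`. -/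
theorem beta_count_lower_bound {V : Type*} [Fintype V] (n : ℕ)
    (hV : Fintype.card V = 138 * n)
    (ℓ : V → Bool) (B A : Fin (3 * n) → Finset V) (t : Fin (3 * n) → Bool)
    (hBcard : ∀ c, (B c).card = 3) (hAcard : ∀ x, (A x).card = 43)
    (hBB : ∀ c c', c ≠ c' → Disjoint (B c) (B c'))
    (hAA : ∀ x x', x ≠ x' → Disjoint (A x) (A x'))
    (hBA : ∀ c x, Disjoint (B c) (A x))
    (hβB : ∀ c, ∃ w ∈ B c, ℓ w = true)
    (hβA : ∀ x, ((A x).filter (fun w => ℓ w = true)).card = if t x then 27 else 16)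
    (hvar : n ≤ (Finset.univ.filter (fun x => t x = true)).card) :
    62 * n ≤ (Finset.univ.filter (fun w : V => ℓ w = true)).card := by
  classical
  set S := Finset.univ.filter (fun w : V => ℓ w = true) with hS
  set TB := (Finset.univ : Finset (Fin (3*n))).biUnion (fun c => (B c).filter (fun w => ℓ w = true)) with hTB
  set TA := (Finset.univ : Finset (Fin (3*n))).biUnion (fun x => (A x).filter (fun w => ℓ w = true)) with hTA
  have hTBcard : TB.card = ∑ c, ((B c).filter (fun w => ℓ w = true)).card := by
    apply Finset.card_biUnion
    intro c _ c' _ h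
    exact Finset.disjoint_filter_filter (hBB c c' h)
  have hTAcard : TA.card = ∑ x, ((A x).filter (fun w => ℓ w = true)).card := by
    apply Finset.card_biUnion
    intro x _ x' _ h
    exact Finset.disjoint_filter_filter (hAA x x' h)
  have hdisj : Disjoint TB TA := by
    simp only [hTB, hTA, Finset.disjoint_biUnion_left, Finset.disjoint_biUnion_right]
    intro c _ x _
    exact Finset.disjoint_filter_filter (hBA x c)
  have hsub : TB ∪ TA ⊆ S := by
    intro w hw
    rcases Finset.mem_union.mp hw with h | h <;>
    · simp only [hTB, hTA, Finset.mem_biUnion, Finset.mem_filter] at h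
      obtain ⟨i, _, _, hw2⟩ := h
      simp [hS, hw2]
  have h1 : 3 * n ≤ TB.card := by
    rw [hTBcard]
    calc 3 * n = ∑ _c : Fin (3*n), 1 := by simp [mul_comm]
    _ ≤ _ := by
        apply Finset.sum_le_sum
        intro c _
        obtain ⟨w, hw, hℓ⟩ := hβB c
        exact Finset.card_pos.mpr ⟨w, Finset.mem_filter.mpr ⟨hw, hℓ⟩⟩
  have h2 : 59 * n ≤ TA.card := by
    rw [hTAcard]
    have : ∑ x, ((A x).filter (fun w => ℓ w = true)).card
        = ∑ x, (16 + if t x then 11 else 0) := by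
      apply Finset.sum_congr rfl
      intro x _
      rw [hβA x]
      by_cases h : t x <;> simp [h]
    rw [this, Finset.sum_add_distrib]
    have h16 : ∑ _x : Fin (3*n), 16 = 48 * n := by simp; ring
    have h11 : ∑ x : Fin (3*n), (if t x then 11 else 0)
        = 11 * (Finset.univ.filter (fun x => t x = true)).card := by
      rw [Finset.sum_ite, Finset.sum_const, Finset.sum_const]
      simp [mul_comm]
    rw [h16, h11]
    have := hvar
    omega
  calc 62 * n = 3 * n + 59 * n := by ring
  _ ≤ TB.card + TA.card := Nat.add_le_add h1 h2
  _ = (TB ∪ TA).card := (Finset.card_union_of_disjoint hdisj).symm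
  _ ≤ S.card := Finset.card_le_card hsub
end
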